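/- Fix δ > 0 and x₀ > 0. Let (x,y) be an admissible pair: y : [0,∞) → (0,∞) Lebesgue measurable and locally bounded, and x : [0,∞) → ℝ locally absolutely continuous with x(0) = x₀ and x'(t) = x(t)(1−x(t)) − y(t)x(t) for a.e. t ≥ 0. Assume t ↦ e^{−δt}(ln x(t)+ln y(t)) is integrable on every compact interval [0,T]. Then the function T ↦ ∫_0^T e^{−δt}( ln x(t) + ln y(t) ) dt has a limit as T → ∞ which is either a finite real number or −∞; i.e., either there exists L ∈ ℝ with ∫_0^T e^{−δt}(ln x + ln y) dt → L, or ∫_0^T e^{−δt}(ln x + ln y) dt → −∞ as T → ∞. -/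

import Mathlib

open MeasureTheory Filter

/-- An admissible pair for problem (P1): `y` is a measurable, locally bounded,
positive control, and `x` is the (locally absolutely continuous) trajectory of the
logistic-harvesting dynamics `x' = x(1−x) − y·x`, `x 0 = x₀`, encoded by the
integral equation. -/
def P1Admissible (x₀ : ℝ) (x y : ℝ → ℝ) : Prop :=
  Measurable y ∧
  (∀ T : ℝ, 0 < T → ∃ C : ℝ, ∀ t ∈ Set.Icc (0:ℝ) T, |y t| ≤ C) ∧
  (∀ t : ℝ, 0 ≤ t → 0 < y t) ∧
  x 0 = x₀ ∧
  (∀ t : ℝ, 0 ≤ t → x t = x₀ + ∫ s in (0:ℝ)..t, (x s * (1 - x s) - y s * x s))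

open Set



lemma aux_tendsto_of_tail (F : ℝ → ℝ) (c δ : ℝ) (hc : 0 ≤ c) (hδ : 0 < δ)
    (hF : ∀ T T' : ℝ, 0 ≤ T → T ≤ T' → F T' ≤ F T + c * Real.exp (-δ * T)) :
    (∃ L : ℝ, Tendsto F atTop (nhds L)) ∨ Tendsto F atTop atBot := by
  have hexp1 : ∀ T : ℝ, 0 ≤ T → c * Real.exp (-δ * T) ≤ c := by
    intro T hT
    have : Real.exp (-δ * T) ≤ 1 := Real.exp_le_one_iff.2 (by nlinarith)
    nlinarith
  by_cases hbdd : ∃ m : ℝ, ∃ T₀ : ℝ, 0 ≤ T₀ ∧ ∀ T, T₀ ≤ T → m ≤ F T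
  · left
    obtain ⟨m, T₀, hT₀, hm⟩ := hbdd
    set g : ℝ → ℝ := fun T => sInf (F '' Set.Ici T) with hgdef
    have hbb : ∀ T, T₀ ≤ T → BddBelow (F '' Set.Ici T) := by
      intro T hT
      exact ⟨m, fun v hv => by obtain ⟨s, hs, rfl⟩ := hv; exact hm s (le_trans hT hs)⟩
    have hne : ∀ T : ℝ, (F '' Set.Ici T).Nonempty := fun T => ⟨F T, T, Set.self_mem_Ici, rfl⟩
    have hg_le : ∀ T, T₀ ≤ T → ∀ s, T ≤ s → g T ≤ F s := fun T hT s hs =>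
      csInf_le (hbb T hT) ⟨s, hs, rfl⟩
    have hg_mono : ∀ T T', T₀ ≤ T → T ≤ T' → g T ≤ g T' := fun T T' hT hTT' =>
      csInf_le_csInf (hbb T hT) (hne T') (Set.image_mono (Set.Ici_subset_Ici.2 hTT'))
    set D := max T₀ 0 with hD
    have hD0 : 0 ≤ D := le_max_right _ _
    have hDT₀ : T₀ ≤ D := le_max_left _ _
    have hgub : ∀ T, D ≤ T → g T ≤ F D + c := by
      intro T hT
      have h1 : g T ≤ F T := hg_le T (le_trans hDT₀ hT) T le_rfl
      have h2 : F T ≤ F D + c * Real.exp (-δ * D) := hF D T hD0 hT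
      have := hexp1 D hD0
      linarith
    set ℓ : ℝ := sSup (g '' Set.Ici D) with hℓ
    have hba : BddAbove (g '' Set.Ici D) := ⟨F D + c, fun v hv => by
      obtain ⟨T, hT, rfl⟩ := hv; exact hgub T hT⟩
    have hneg : (g '' Set.Ici D).Nonempty := ⟨g D, D, Set.self_mem_Ici, rfl⟩
    refine ⟨ℓ, Metric.tendsto_atTop.2 ?_⟩
    intro ε hε
    -- find T₁ ≥ D with g T₁ > ℓ - ε/2
    obtain ⟨v, hvmem, hv⟩ := exists_lt_of_lt_csSup hneg (show ℓ - ε/2 < ℓ by linarith)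
    obtain ⟨T₁, hT₁D, rfl⟩ := hvmem
    -- find T₂ ≥ T₁ with c * exp (-δ T₂) < ε/2
    have htend : Tendsto (fun T : ℝ => c * Real.exp (-δ * T)) atTop (nhds 0) := by
      have h1 : Tendsto (fun T : ℝ => -δ * T) atTop atBot :=
        tendsto_id.const_mul_atTop_of_neg (by linarith)
      have h2 : Tendsto (fun T : ℝ => Real.exp (-δ * T)) atTop (nhds 0) :=
        Real.tendsto_exp_atBot.comp h1
      simpa using h2.const_mul c
    have hev : ∀ᶠ T in atTop, c * Real.exp (-δ * T) < ε/2 :=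
      htend.eventually_lt_const (by linarith)
    obtain ⟨T₂, hT₂⟩ := (hev.and (eventually_ge_atTop T₁)).exists_forall_of_atTop
    obtain ⟨hT₂e, hT₂T₁⟩ := hT₂ T₂ le_rfl
    have hT₂D : D ≤ T₂ := le_trans hT₁D hT₂T₁
    have hT₂T₀ : T₀ ≤ T₂ := le_trans hDT₀ hT₂D
    have hgT₂ : ℓ - ε/2 < g T₂ := lt_of_lt_of_le hv (hg_mono T₁ T₂ (le_trans hDT₀ hT₁D) hT₂T₁)
    have hgT₂le : g T₂ ≤ ℓ := le_csSup hba ⟨T₂, hT₂D, rfl⟩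
    -- find u ≥ T₂ with F u < g T₂ + ε/2
    obtain ⟨w, hwmem, hw⟩ := exists_lt_of_csInf_lt (hne T₂) (show g T₂ < g T₂ + ε/2 by linarith)
    obtain ⟨u, huT₂, rfl⟩ := hwmem
    refine ⟨u, fun s hs => ?_⟩
    have hu0 : 0 ≤ u := le_trans hD0 (le_trans hT₂D huT₂)
    have h1 : F s ≤ F u + c * Real.exp (-δ * u) := hF u s hu0 hs
    have huT₂' : T₂ ≤ u := huT₂
    have h2 : c * Real.exp (-δ * u) ≤ c * Real.exp (-δ * T₂) := by
      have : Real.exp (-δ * u) ≤ Real.exp (-δ * T₂) := Real.exp_le_exp.2 (by nlinarith)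
      nlinarith
    have h3 : g T₂ ≤ F s := hg_le T₂ hT₂T₀ s (le_trans huT₂' hs)
    rw [Real.dist_eq, abs_lt]
    constructor <;> linarith
  · right
    push_neg at hbdd
    rw [tendsto_atTop_atBot]
    intro b
    obtain ⟨T, hT0, hFT⟩ := hbdd (b - c) 0 le_rfl
    exact ⟨T, fun s hs => by have := hF T s hT0 hs; have := hexp1 T hT0; linarith⟩

section aux
variable (x y : ℝ → ℝ) (x₀ : ℝ)

/-- difference form of the integral equation -/
lemma aux_diff (T a b : ℝ) (ha : 0 ≤ a) (hab : a ≤ b) (hbT : b ≤ T)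
    (hInt : IntegrableOn (fun s => x s * (1 - x s) - y s * x s) (Set.Ioc 0 T))
    (heq : ∀ t : ℝ, 0 ≤ t → x t = x₀ + ∫ s in (0:ℝ)..t, (x s * (1 - x s) - y s * x s)) :
    x b - x a = ∫ s in a..b, (x s * (1 - x s) - y s * x s) := by
  have h0b : IntervalIntegrable (fun s => x s * (1 - x s) - y s * x s) volume 0 b :=
    (intervalIntegrable_iff_integrableOn_Ioc_of_le (le_trans ha hab)).2
      (hInt.mono_set (Set.Ioc_subset_Ioc le_rfl hbT))
  have h0a : IntervalIntegrable (fun s => x s * (1 - x s) - y s * x s) volume 0 a :=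
    (intervalIntegrable_iff_integrableOn_Ioc_of_le ha).2
      (hInt.mono_set (Set.Ioc_subset_Ioc le_rfl (le_trans hab hbT)))
  rw [heq b (le_trans ha hab), heq a ha]
  have := intervalIntegral.integral_interval_sub_left h0b h0a
  linarith [this]

/-- continuity of x on [0,T] -/
lemma aux_cont (T : ℝ) (hT : 0 ≤ T)
    (hInt : IntegrableOn (fun s => x s * (1 - x s) - y s * x s) (Set.Ioc 0 T))
    (heq : ∀ t : ℝ, 0 ≤ t → x t = x₀ + ∫ s in (0:ℝ)..t, (x s * (1 - x s) - y s * x s)) :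
    ContinuousOn x (Set.Icc 0 T) := by
  have hInt' : IntegrableOn (fun s => x s * (1 - x s) - y s * x s) (Set.Icc 0 T) := by
    rwa [integrableOn_Icc_iff_integrableOn_Ioc]
  have hcont : ContinuousOn
      (fun t => (∫ s in Set.Ioc (0:ℝ) t, (x s * (1 - x s) - y s * x s)) + x₀)
      (Set.Icc 0 T) :=
    (intervalIntegral.continuousOn_primitive hInt').add continuousOn_const
  refine ContinuousOn.congr hcont ?_
  intro t ht
  rw [heq t ht.1, intervalIntegral.integral_of_le ht.1]
  ring

/-- upper bound: x ≤ max x₀ 1 on [0,T] -/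
lemma aux_upper (T : ℝ) (hx₀ : 0 < x₀)
    (hy : ∀ t : ℝ, 0 ≤ t → 0 < y t)
    (hx0 : x 0 = x₀)
    (hcont : ContinuousOn x (Set.Icc 0 T))
    (hInt : IntegrableOn (fun s => x s * (1 - x s) - y s * x s) (Set.Ioc 0 T))
    (heq : ∀ t : ℝ, 0 ≤ t → x t = x₀ + ∫ s in (0:ℝ)..t, (x s * (1 - x s) - y s * x s)) :
    ∀ t ∈ Set.Icc (0:ℝ) T, x t ≤ max x₀ 1 := by
  by_contra hcon
  push_neg at hcon
  obtain ⟨b, hbmem, hb⟩ := hcon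
  set M := max x₀ 1 with hM
  set A := {t ∈ Set.Icc (0:ℝ) b | x t ≤ M} with hA
  have hbT := hbmem.2
  have hb0 := hbmem.1
  have hsub : Set.Icc (0:ℝ) b ⊆ Set.Icc 0 T := Set.Icc_subset_Icc le_rfl hbT
  have hAne : A.Nonempty := ⟨0, ⟨Set.left_mem_Icc.2 hb0, by rw [hx0]; exact le_max_left _ _⟩⟩
  have hAbdd : BddAbove A := ⟨b, fun t ht => ht.1.2⟩
  have hAclosed : IsClosed A := by
    have h1 : A = Set.Icc 0 b ∩ x ⁻¹' Set.Iic M := by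
      ext t; simp only [hA, Set.mem_setOf_eq, Set.mem_inter_iff, Set.mem_preimage,
        Set.mem_Iic]
    rw [h1]
    exact (hcont.mono hsub).preimage_isClosed_of_isClosed isClosed_Icc isClosed_Iic
  set t₁ := sSup A with ht₁
  have ht₁A : t₁ ∈ A := hAclosed.csSup_mem hAne hAbdd
  have ht₁b : t₁ ≤ b := ht₁A.1.2
  have ht₁0 : 0 ≤ t₁ := ht₁A.1.1
  have ht₁lt : t₁ < b := by
    rcases lt_or_eq_of_le ht₁b with h | h
    · exact h
    · exfalso; rw [h] at ht₁A; exact absurd ht₁A.2 (not_le.2 hb)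
  have hgt : ∀ t ∈ Set.Ioc t₁ b, M < x t := by
    intro t ht
    by_contra hle
    push_neg at hle
    have : t ∈ A := ⟨⟨le_trans ht₁0 ht.1.le, ht.2⟩, hle⟩
    exact absurd (le_csSup hAbdd this) (not_le.2 ht.1)
  have hdiff := aux_diff x y x₀ T t₁ b ht₁0 ht₁b hbT hInt heq
  have hM1 : (1:ℝ) ≤ M := le_max_right _ _
  have hnonpos : (∫ s in Set.Ioc t₁ b, (x s * (1 - x s) - y s * x s)) ≤ 0 := by
    refine setIntegral_nonpos measurableSet_Ioc ?_
    intro s hs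
    have hxs : M < x s := hgt s hs
    have hys : 0 < y s := hy s (le_trans ht₁0 hs.1.le)
    nlinarith
  rw [intervalIntegral.integral_of_le ht₁b] at hdiff
  have : x b ≤ x t₁ := by linarith
  have := ht₁A.2
  linarith

/-- positivity: 0 < x on [0,T] -/
lemma aux_pos (T C : ℝ) (hx₀ : 0 < x₀)
    (hy : ∀ t : ℝ, 0 ≤ t → 0 < y t)
    (hx0 : x 0 = x₀)
    (hC : ∀ t ∈ Set.Icc (0:ℝ) T, |y t| ≤ C)
    (hcont : ContinuousOn x (Set.Icc 0 T))
    (hInt : IntegrableOn (fun s => x s * (1 - x s) - y s * x s) (Set.Ioc 0 T))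
    (heq : ∀ t : ℝ, 0 ≤ t → x t = x₀ + ∫ s in (0:ℝ)..t, (x s * (1 - x s) - y s * x s))
    (hle : ∀ t ∈ Set.Icc (0:ℝ) T, x t ≤ max x₀ 1) :
    ∀ t ∈ Set.Icc (0:ℝ) T, 0 < x t := by
  by_contra hcon
  push_neg at hcon
  obtain ⟨t₂, ht₂mem, ht₂⟩ := hcon
  -- a zero of x exists in [0, t₂]
  have hz : ∃ z ∈ Set.Icc (0:ℝ) t₂, x z = 0 := by
    have hIVT := intermediate_value_Icc' ht₂mem.1 (hcont.mono (Set.Icc_subset_Icc le_rfl ht₂mem.2))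
    have h0mem : (0:ℝ) ∈ Set.Icc (x t₂) (x 0) := ⟨ht₂, by rw [hx0]; exact hx₀.le⟩
    obtain ⟨z, hz, hz0⟩ := hIVT h0mem
    exact ⟨z, hz, hz0⟩
  obtain ⟨z₀, hz₀mem, hz₀⟩ := hz
  set Z := {t ∈ Set.Icc (0:ℝ) t₂ | x t = 0} with hZ
  have hZne : Z.Nonempty := ⟨z₀, hz₀mem, hz₀⟩
  have hZbdd : BddBelow Z := ⟨0, fun t ht => ht.1.1⟩
  have hsub2 : Set.Icc (0:ℝ) t₂ ⊆ Set.Icc 0 T := Set.Icc_subset_Icc le_rfl ht₂mem.2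
  have hZclosed : IsClosed Z := by
    have h1 : Z = Set.Icc 0 t₂ ∩ x ⁻¹' {0} := by
      ext t; simp only [hZ, Set.mem_setOf_eq, Set.mem_inter_iff, Set.mem_preimage,
        Set.mem_singleton_iff]
    rw [h1]
    exact (hcont.mono hsub2).preimage_isClosed_of_isClosed isClosed_Icc isClosed_singleton
  set t₀ := sInf Z with ht₀def
  have ht₀Z : t₀ ∈ Z := hZclosed.csInf_mem hZne hZbdd
  have ht₀mem : t₀ ∈ Set.Icc (0:ℝ) t₂ := ht₀Z.1
  have ht₀x : x t₀ = 0 := ht₀Z.2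
  have ht₀0 : 0 ≤ t₀ := ht₀mem.1
  -- x ≥ 0 on [0, t₀]
  have hge : ∀ s ∈ Set.Icc (0:ℝ) t₀, 0 ≤ x s := by
    intro s hs
    by_contra hneg
    push_neg at hneg
    have hsmem : s ∈ Set.Icc (0:ℝ) t₂ := ⟨hs.1, le_trans hs.2 ht₀mem.2⟩
    have hIVT := intermediate_value_Icc' hs.1 (hcont.mono (Set.Icc_subset_Icc le_rfl
      (le_trans hsmem.2 ht₂mem.2)))
    have h0mem : (0:ℝ) ∈ Set.Icc (x s) (x 0) := ⟨hneg.le, by rw [hx0]; exact hx₀.le⟩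
    obtain ⟨z, hzmem, hz0⟩ := hIVT h0mem
    have hzZ : z ∈ Z := ⟨⟨hzmem.1, le_trans hzmem.2 hsmem.2⟩, hz0⟩
    have : t₀ ≤ z := csInf_le hZbdd hzZ
    have hzs : z ≤ s := hzmem.2
    -- then s ≥ t₀, x s < 0, but also s ≤ t₀ forces z = t₀... derive contradiction:
    -- z ≤ s ≤ t₀ ≤ z so z = s = t₀, x s = x t₀ = 0 contradicts x s < 0
    have : x s < 0 := hneg
    have hst₀ : s ≤ t₀ := hs.2
    have : z = s := le_antisymm hzs (le_trans hst₀ ‹t₀ ≤ z›)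
    rw [this] at hz0
    linarith
  set M := max x₀ 1 with hM
  have hM0 : 0 < M := lt_of_lt_of_le hx₀ (le_max_left _ _)
  set C' := max C 0 with hC'
  set K := M + C' + 1 with hK
  have hK0 : 0 < K := by positivity
  set c : ℝ → ℝ := fun t => x₀ * Real.exp (-(2*K) * t) with hc
  have hcpos : ∀ t, 0 < c t := fun t => mul_pos hx₀ (Real.exp_pos _)
  set B := {t ∈ Set.Icc (0:ℝ) t₀ | c t ≤ x t} with hB
  have hBne : B.Nonempty := ⟨0, Set.left_mem_Icc.2 ht₀0, by
    simp only [hc, mul_zero, neg_zero, Real.exp_zero, mul_one]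
    rw [hx0]⟩
  have hBbdd : BddAbove B := ⟨t₀, fun t ht => ht.1.2⟩
  have hsub3 : Set.Icc (0:ℝ) t₀ ⊆ Set.Icc 0 T := Set.Icc_subset_Icc le_rfl
    (le_trans ht₀mem.2 ht₂mem.2)
  have hccont : Continuous c := by
    exact continuous_const.mul (Real.continuous_exp.comp (continuous_const.mul continuous_id))
  have hBclosed : IsClosed B := by
    have h1 : B = Set.Icc 0 t₀ ∩ (fun t => x t - c t) ⁻¹' Set.Ici 0 := by
      ext t
      simp only [hB, Set.mem_setOf_eq, Set.mem_inter_iff, Set.mem_preimage, Set.mem_Ici,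
        sub_nonneg]
    rw [h1]
    exact ((hcont.mono hsub3).sub hccont.continuousOn).preimage_isClosed_of_isClosed
      isClosed_Icc isClosed_Ici
  set t₁ := sSup B with ht₁def
  have ht₁B : t₁ ∈ B := hBclosed.csSup_mem hBne hBbdd
  have ht₁mem : t₁ ∈ Set.Icc (0:ℝ) t₀ := ht₁B.1
  have ht₁0 : 0 ≤ t₁ := ht₁mem.1
  have ht₁t₀ : t₁ ≤ t₀ := ht₁mem.2
  have ht₁x : c t₁ ≤ x t₁ := ht₁B.2
  have ht₁lt : t₁ < t₀ := by
    rcases lt_or_eq_of_le ht₁t₀ with h | h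
    · exact h
    · exfalso
      rw [h] at ht₁x
      rw [ht₀x] at ht₁x
      exact absurd ht₁x (not_le.2 (hcpos t₀))
  have hlt : ∀ t ∈ Set.Ioc t₁ t₀, x t < c t := by
    intro t ht
    by_contra hge'
    push_neg at hge'
    have : t ∈ B := ⟨⟨le_trans ht₁0 ht.1.le, ht.2⟩, hge'⟩
    exact absurd (le_csSup hBbdd this) (not_le.2 ht.1)
  -- pointwise lower bound for the vector field on (t₁, t₀]
  have hpt : ∀ t ∈ Set.Ioc t₁ t₀, -K * c t ≤ x t * (1 - x t) - y t * x t := by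
    intro t ht
    have ht0 : 0 ≤ t := le_trans ht₁0 ht.1.le
    have htT : t ∈ Set.Icc (0:ℝ) T := ⟨ht0, le_trans ht.2 (le_trans ht₀mem.2 ht₂mem.2)⟩
    have hx1 : 0 ≤ x t := hge t ⟨ht0, ht.2⟩
    have hx2 : x t ≤ M := hle t htT
    have hy1 : 0 < y t := hy t ht0
    have hy2 : y t ≤ C' := le_trans (le_abs_self _) (le_trans (hC t htT) (le_max_left _ _))
    have hx3 : x t < c t := hlt t ht
    nlinarith [hcpos t]
  -- integral comparison
  have hIIc : IntervalIntegrable (fun t => -K * c t) volume t₁ t₀ :=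
    ((continuous_const.mul hccont).intervalIntegrable _ _)
  have hIIh : IntegrableOn (fun s => x s * (1 - x s) - y s * x s) (Set.Ioc t₁ t₀) :=
    hInt.mono_set (Set.Ioc_subset_Ioc ht₁0 (le_trans ht₀mem.2 ht₂mem.2))
  have hmono : (∫ t in Set.Ioc t₁ t₀, (-K * c t)) ≤
      ∫ t in Set.Ioc t₁ t₀, (x t * (1 - x t) - y t * x t) := by
    refine setIntegral_mono_on ?_ hIIh measurableSet_Ioc hpt
    rw [← integrableOn_Icc_iff_integrableOn_Ioc]
    exact (continuous_const.mul hccont).continuousOn.integrableOn_Icc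
  -- compute the left integral
  have hderiv : ∀ t : ℝ, HasDerivAt (fun t => (x₀/2) * Real.exp (-(2*K) * t)) (-K * c t) t := by
    intro t
    have h1 : HasDerivAt (fun t : ℝ => -(2*K) * t) (-(2*K)) t := by
      simpa using (hasDerivAt_id t).const_mul (-(2*K))
    have h2 := (Real.hasDerivAt_exp (-(2*K) * t)).comp t h1
    have h3 := h2.const_mul (x₀/2)
    refine h3.congr_deriv ?_
    simp only [hc]
    ring
  have hcalc : (∫ t in t₁..t₀, (-K * c t)) = (x₀/2) * Real.exp (-(2*K) * t₀)
      - (x₀/2) * Real.exp (-(2*K) * t₁) := by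
    exact intervalIntegral.integral_eq_sub_of_hasDerivAt (fun t _ => hderiv t) hIIc
  rw [intervalIntegral.integral_of_le ht₁t₀] at hcalc
  -- conclude
  have hdiff := aux_diff x y x₀ T t₁ t₀ ht₁0 ht₁t₀ (le_trans ht₀mem.2 ht₂mem.2) hInt heq
  rw [intervalIntegral.integral_of_le ht₁t₀] at hdiff
  have hmono2 : Real.exp (-(2*K) * t₀) ≤ Real.exp (-(2*K) * t₁) := by
    apply Real.exp_le_exp.2
    nlinarith
  have hct₀ : 0 < c t₀ := hcpos t₀
  have hct₁ : c t₁ = x₀ * Real.exp (-(2*K) * t₁) := rfl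
  have hct₀' : c t₀ = x₀ * Real.exp (-(2*K) * t₀) := rfl
  -- x t₀ = x t₁ + ∫ ≥ c t₁ + (c t₀ - c t₁)/2 = (c t₀ + c t₁)/2 ≥ c t₀ > 0
  have : (0:ℝ) = x t₀ := ht₀x.symm
  nlinarith [hmono, hcalc, hdiff, ht₁x, hct₀, hmono2]

/-- bootstrap: the vector field is integrable on every [0,T] -/
lemma aux_locint (hx₀ : 0 < x₀)
    (hmeas : Measurable y)
    (hloc : ∀ T : ℝ, 0 < T → ∃ C : ℝ, ∀ t ∈ Set.Icc (0:ℝ) T, |y t| ≤ C)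
    (hy : ∀ t : ℝ, 0 ≤ t → 0 < y t)
    (hx0 : x 0 = x₀)
    (heq : ∀ t : ℝ, 0 ≤ t → x t = x₀ + ∫ s in (0:ℝ)..t, (x s * (1 - x s) - y s * x s)) :
    ∀ T : ℝ, 0 ≤ T → IntegrableOn (fun s => x s * (1 - x s) - y s * x s) (Set.Ioc 0 T) := by
  set h : ℝ → ℝ := fun s => x s * (1 - x s) - y s * x s with hh
  intro T₀ hT₀
  rcases eq_or_lt_of_le hT₀ with hT₀' | hT₀'
  · rw [← hT₀', Set.Ioc_self]; exact integrableOn_empty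
  by_contra hbad
  obtain ⟨C, hC⟩ := hloc T₀ hT₀'
  set S := {t ∈ Set.Icc (0:ℝ) T₀ | IntegrableOn h (Set.Ioc 0 t)} with hS
  have h0S : (0:ℝ) ∈ S := ⟨Set.left_mem_Icc.2 hT₀, by rw [Set.Ioc_self]; exact integrableOn_empty⟩
  have hSne : S.Nonempty := ⟨0, h0S⟩
  have hSbdd : BddAbove S := ⟨T₀, fun t ht => ht.1.2⟩
  set τ := sSup S with hτdef
  have hτ0 : 0 ≤ τ := le_csSup hSbdd h0S
  have hτT₀ : τ ≤ T₀ := csSup_le hSne (fun t ht => ht.1.2)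
  -- (ii) if not integrable up to t then x t = x₀
  have hxconst : ∀ t : ℝ, 0 ≤ t → ¬ IntegrableOn h (Set.Ioc 0 t) → x t = x₀ := by
    intro t ht hni
    rw [heq t ht, intervalIntegral.integral_of_le ht]
    rw [integral_undef hni]
    ring
  -- (i) integrable strictly below τ
  have hbelow : ∀ t : ℝ, t < τ → IntegrableOn h (Set.Ioc 0 t) := by
    intro t htτ
    obtain ⟨s, hsS, hts⟩ := exists_lt_of_lt_csSup hSne htτ
    exact hsS.2.mono_set (Set.Ioc_subset_Ioc le_rfl hts.le)
  by_cases hτS : IntegrableOn h (Set.Ioc 0 τ)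
  · -- case τ integrable: extend beyond τ by constancy of x
    have hτltT₀ : τ < T₀ := by
      rcases lt_or_eq_of_le hτT₀ with h' | h'
      · exact h'
      · exact absurd (h' ▸ hτS) hbad
    have hxc : ∀ t ∈ Set.Ioc τ T₀, x t = x₀ := by
      intro t ht
      refine hxconst t (le_trans hτ0 ht.1.le) ?_
      intro hi
      have : t ∈ S := ⟨⟨le_trans hτ0 ht.1.le, ht.2⟩, hi⟩
      exact absurd (le_csSup hSbdd this) (not_le.2 ht.1)
    have hunion : Set.Ioc (0:ℝ) T₀ = Set.Ioc 0 τ ∪ Set.Ioc τ T₀ :=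
      (Set.Ioc_union_Ioc_eq_Ioc hτ0 hτT₀).symm
    have hInt2 : IntegrableOn h (Set.Ioc τ T₀) := by
      have hgeq : Set.EqOn h (fun t => x₀ * (1 - x₀) - y t * x₀) (Set.Ioc τ T₀) := by
        intro t ht
        simp only [hh]
        rw [hxc t ht]
      refine IntegrableOn.congr_fun ?_ hgeq.symm measurableSet_Ioc
      have hmg : AEStronglyMeasurable (fun t => x₀ * (1 - x₀) - y t * x₀)
          (volume.restrict (Set.Ioc τ T₀)) :=
        ((measurable_const.sub (hmeas.mul measurable_const)).aestronglyMeasurable)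
      refine Integrable.mono' (g := fun _ => |x₀ * (1 - x₀)| + C * |x₀|)
        (integrableOn_const measure_Ioc_lt_top.ne) hmg ?_
      refine (ae_restrict_iff' measurableSet_Ioc).2 (ae_of_all _ ?_)
      intro t ht
      have hyt : |y t| ≤ C := hC t ⟨le_trans hτ0 ht.1.le, ht.2⟩
      have : |x₀ * (1 - x₀) - y t * x₀| ≤ |x₀ * (1 - x₀)| + |y t * x₀| := abs_sub _ _
      have h2 : |y t * x₀| ≤ C * |x₀| := by
        rw [abs_mul]
        exact mul_le_mul_of_nonneg_right hyt (abs_nonneg _)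
      simp only [Real.norm_eq_abs]
      linarith
    exact hbad (hunion ▸ hτS.union hInt2)
  · -- case τ not integrable: contradiction via boundedness on [0,τ)
    have hτpos : 0 < τ := by
      rcases eq_or_lt_of_le hτ0 with h' | h'
      · exfalso; apply hτS; rw [← h', Set.Ioc_self]; exact integrableOn_empty
      · exact h'
    -- continuity and bounds on [0, t] for every t < τ
    have hbound : ∀ t ∈ Set.Ioo (0:ℝ) τ, 0 < x t ∧ x t ≤ max x₀ 1 := by
      intro t ht
      have hi : IntegrableOn h (Set.Ioc 0 t) := hbelow t ht.2
      have hcont : ContinuousOn x (Set.Icc 0 t) := aux_cont x y x₀ t ht.1.le hi heq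
      have hCt : ∀ s ∈ Set.Icc (0:ℝ) t, |y s| ≤ C := fun s hs =>
        hC s ⟨hs.1, le_trans hs.2 (le_trans ht.2.le hτT₀)⟩
      have hup := aux_upper x y x₀ t hx₀ hy hx0 hcont hi heq
      have hpos := aux_pos x y x₀ t C hx₀ hy hx0 hCt hcont hi heq hup
      exact ⟨hpos t (Set.right_mem_Icc.2 ht.1.le), hup t (Set.right_mem_Icc.2 ht.1.le)⟩
    -- x measurable on Ioo 0 τ
    have hxcont : ContinuousOn x (Set.Ioo 0 τ) := by
      intro t ht
      have hi : IntegrableOn h (Set.Ioc 0 ((t + τ)/2)) := hbelow _ (by linarith [ht.1, ht.2])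
      have hcont : ContinuousOn x (Set.Icc 0 ((t + τ)/2)) :=
        aux_cont x y x₀ _ (by linarith [ht.1]) hi heq
      have hmem : t ∈ Set.Icc (0:ℝ) ((t + τ)/2) := ⟨ht.1.le, by linarith [ht.2]⟩
      refine (hcont t hmem).mono_of_mem_nhdsWithin ?_
      have h1 : Set.Ioo (0:ℝ) τ ∩ Set.Iio ((t + τ)/2) ∈ nhdsWithin t (Set.Ioo 0 τ) :=
        inter_mem_nhdsWithin _ (Iio_mem_nhds (by linarith [ht.2]))
      refine Filter.mem_of_superset h1 ?_
      intro s hs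
      exact ⟨hs.1.1.le, hs.2.le⟩
    have hmx : AEMeasurable x (volume.restrict (Set.Ioo 0 τ)) :=
      hxcont.aemeasurable measurableSet_Ioo
    have hmh : AEStronglyMeasurable h (volume.restrict (Set.Ioo 0 τ)) := by
      have : AEMeasurable h (volume.restrict (Set.Ioo 0 τ)) :=
        (hmx.mul ((aemeasurable_const.sub hmx))).sub
          ((hmeas.aemeasurable).mul hmx)
      exact this.aestronglyMeasurable
    have hM0 : 0 < max x₀ 1 := lt_of_lt_of_le hx₀ (le_max_left _ _)
    set M := max x₀ 1 with hMdef
    have hIoo : IntegrableOn h (Set.Ioo 0 τ) := by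
      refine Integrable.mono' (g := fun _ => M * (1 + M) + C * M)
        (integrableOn_const measure_Ioo_lt_top.ne) hmh ?_
      refine (ae_restrict_iff' measurableSet_Ioo).2 (ae_of_all _ ?_)
      intro t ht
      obtain ⟨hpt, hle⟩ := hbound t ht
      have hyt : |y t| ≤ C := hC t ⟨ht.1.le, le_trans ht.2.le hτT₀⟩
      have hC0 : 0 ≤ C := le_trans (abs_nonneg _) hyt
      simp only [hh, Real.norm_eq_abs]
      have h1 : |x t * (1 - x t) - y t * x t| ≤ |x t * (1 - x t)| + |y t * x t| := abs_sub _ _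
      have h2 : |x t * (1 - x t)| ≤ M * (1 + M) := by
        rw [abs_mul]
        have : |x t| ≤ M := abs_le.2 ⟨by linarith, hle⟩
        have h3 : |1 - x t| ≤ 1 + M := abs_le.2 ⟨by linarith, by linarith⟩
        nlinarith [abs_nonneg (x t), abs_nonneg (1 - x t)]
      have h4 : |y t * x t| ≤ C * M := by
        rw [abs_mul]
        have : |x t| ≤ M := abs_le.2 ⟨by linarith, hle⟩
        exact mul_le_mul hyt this (abs_nonneg _) hC0
      linarith
    exact hτS ((integrableOn_Ioc_iff_integrableOn_Ioo).2 hIoo)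

/-- one-step tail estimate: ∫_a^b f ≤ 2 M e^{-δ a} for b ≤ a+1 -/
lemma aux_step (δ a b : ℝ) (hδ : 0 < δ) (hx₀ : 0 < x₀)
    (ha : 0 ≤ a) (hab : a ≤ b) (hb1 : b ≤ a + 1)
    (hy : ∀ t : ℝ, 0 ≤ t → 0 < y t)
    (hxpos : ∀ t : ℝ, 0 ≤ t → 0 < x t)
    (hxle : ∀ t : ℝ, 0 ≤ t → x t ≤ max x₀ 1)
    (hcont : ContinuousOn x (Set.Icc 0 b))
    (hInt : IntegrableOn (fun s => x s * (1 - x s) - y s * x s) (Set.Ioc 0 b))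
    (heq : ∀ t : ℝ, 0 ≤ t → x t = x₀ + ∫ s in (0:ℝ)..t, (x s * (1 - x s) - y s * x s))
    (hintf : IntervalIntegrable
      (fun t => Real.exp (-δ * t) * (Real.log (x t) + Real.log (y t))) volume 0 b) :
    (∫ t in a..b, Real.exp (-δ * t) * (Real.log (x t) + Real.log (y t)))
      ≤ 2 * max x₀ 1 * Real.exp (-δ * a) := by
  set M := max x₀ 1 with hMdef
  have hM0 : 0 < M := lt_of_lt_of_le hx₀ (le_max_left _ _)
  have hb0 : 0 ≤ b := le_trans ha hab
  set h : ℝ → ℝ := fun s => x s * (1 - x s) - y s * x s with hh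
  have hcontab : ContinuousOn x (Set.Icc a b) := hcont.mono (Set.Icc_subset_Icc ha le_rfl)
  have hcontab' : ContinuousOn x (Set.uIcc a b) := by
    rwa [Set.uIcc_of_le hab]
  have hIIh : IntervalIntegrable h volume a b :=
    (intervalIntegrable_iff_integrableOn_Ioc_of_le hab).2
      (hInt.mono_set (Set.Ioc_subset_Ioc ha le_rfl))
  have hIIf : IntervalIntegrable
      (fun t => Real.exp (-δ * t) * (Real.log (x t) + Real.log (y t))) volume a b :=
    hintf.mono_set (by rw [Set.uIcc_of_le hab, Set.uIcc_of_le hb0]; exact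
      Set.Icc_subset_Icc ha le_rfl)
  have hIIq : IntervalIntegrable (fun t => x t * (1 - x t)) volume a b :=
    (hcontab'.mul (continuousOn_const.sub hcontab')).intervalIntegrable
  have hIIyx : IntervalIntegrable (fun t => y t * x t) volume a b := by
    have : (fun t => y t * x t) = fun t => x t * (1 - x t) - h t := by
      funext t; simp only [hh]; ring
    rw [this]
    exact hIIq.sub hIIh
  have hIIg : IntervalIntegrable (fun t => Real.exp (-δ * a) * (y t * x t)) volume a b :=
    hIIyx.const_mul _
  -- pointwise bound on Icc a b
  have hpt : ∀ t ∈ Set.Icc a b, Real.exp (-δ * t) * (Real.log (x t) + Real.log (y t))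
      ≤ Real.exp (-δ * a) * (y t * x t) := by
    intro t ht
    have ht0 : 0 ≤ t := le_trans ha ht.1
    have hxp := hxpos t ht0
    have hyp := hy t ht0
    have hlog : Real.log (x t) + Real.log (y t) = Real.log (x t * y t) :=
      (Real.log_mul hxp.ne' hyp.ne').symm
    rw [hlog]
    have h1 : Real.log (x t * y t) ≤ x t * y t - 1 :=
      Real.log_le_sub_one_of_pos (mul_pos hxp hyp)
    have he1 : (0:ℝ) < Real.exp (-δ * t) := Real.exp_pos _
    have he2 : Real.exp (-δ * t) ≤ Real.exp (-δ * a) := Real.exp_le_exp.2 (by nlinarith [ht.1])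
    nlinarith [mul_pos hxp hyp]
  have step1 := intervalIntegral.integral_mono_on hab hIIf hIIg hpt
  -- compute/estimate the right side
  have step2 : (∫ t in a..b, Real.exp (-δ * a) * (y t * x t))
      = Real.exp (-δ * a) * ∫ t in a..b, y t * x t := by
    exact intervalIntegral.integral_const_mul _ _
  have hyx_eq : (∫ t in a..b, y t * x t) = (∫ t in a..b, x t * (1 - x t)) - (x b - x a) := by
    have hdiff := aux_diff x y x₀ b a b ha hab le_rfl hInt heq
    rw [hdiff]
    rw [← intervalIntegral.integral_sub hIIq hIIh]
    congr 1
    funext t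
    simp only [hh]
    ring
  have hq_le : (∫ t in a..b, x t * (1 - x t)) ≤ M * (b - a) := by
    have := intervalIntegral.integral_mono_on hab hIIq
      (intervalIntegrable_const (c := M)) (fun t ht => by
        have ht0 : 0 ≤ t := le_trans ha ht.1
        have h1 := hxpos t ht0
        have h2 := hxle t ht0
        nlinarith)
    simp only [intervalIntegral.integral_const, smul_eq_mul] at this
    linarith
  have hxb := hxpos b hb0
  have hxa := hxle a ha
  have hyx_le : (∫ t in a..b, y t * x t) ≤ 2 * M := by
    rw [hyx_eq]
    have : M * (b - a) ≤ M * 1 := by nlinarith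
    nlinarith
  calc (∫ t in a..b, Real.exp (-δ * t) * (Real.log (x t) + Real.log (y t)))
      ≤ Real.exp (-δ * a) * ∫ t in a..b, y t * x t := by rw [← step2]; exact step1
    _ ≤ Real.exp (-δ * a) * (2 * M) := by
        have := Real.exp_pos (-δ * a)
        nlinarith
    _ = 2 * M * Real.exp (-δ * a) := by ring
end aux

private theorem objective_integral_limit_exists_aux (δ x₀ : ℝ) (hδ : 0 < δ) (hx₀ : 0 < x₀)
    (x y : ℝ → ℝ)
    (hmeas : Measurable y)
    (hloc : ∀ T : ℝ, 0 < T → ∃ C : ℝ, ∀ t ∈ Set.Icc (0:ℝ) T, |y t| ≤ C)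
    (hy : ∀ t : ℝ, 0 ≤ t → 0 < y t)
    (hx0 : x 0 = x₀)
    (heq : ∀ t : ℝ, 0 ≤ t → x t = x₀ + ∫ s in (0:ℝ)..t, (x s * (1 - x s) - y s * x s))
    (hint : ∀ T : ℝ, IntervalIntegrable
      (fun t => Real.exp (-δ * t) * (Real.log (x t) + Real.log (y t))) volume 0 T) :
    (∃ L : ℝ, Tendsto
        (fun T : ℝ => ∫ t in (0:ℝ)..T, Real.exp (-δ * t) * (Real.log (x t) + Real.log (y t)))
        atTop (nhds L)) ∨
      Tendsto
        (fun T : ℝ => ∫ t in (0:ℝ)..T, Real.exp (-δ * t) * (Real.log (x t) + Real.log (y t)))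
        atTop atBot := by
  have hInt : ∀ T : ℝ, 0 ≤ T →
      IntegrableOn (fun s => x s * (1 - x s) - y s * x s) (Set.Ioc 0 T) :=
    aux_locint x y x₀ hx₀ hmeas hloc hy hx0 heq
  have hcont : ∀ T : ℝ, 0 ≤ T → ContinuousOn x (Set.Icc 0 T) :=
    fun T hT => aux_cont x y x₀ T hT (hInt T hT) heq
  set M := max x₀ 1 with hMdef
  have hM0 : 0 < M := lt_of_lt_of_le hx₀ (le_max_left _ _)
  have hxle : ∀ t : ℝ, 0 ≤ t → x t ≤ M := by
    intro t ht
    exact aux_upper x y x₀ t hx₀ hy hx0 (hcont t ht) (hInt t ht) heq t (Set.right_mem_Icc.2 ht)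
  have hxpos : ∀ t : ℝ, 0 ≤ t → 0 < x t := by
    intro t ht
    rcases eq_or_lt_of_le ht with h' | h'
    · rw [← h', hx0]; exact hx₀
    · obtain ⟨C, hC⟩ := hloc t h'
      exact aux_pos x y x₀ t C hx₀ hy hx0 hC (hcont t ht) (hInt t ht) heq
        (fun s hs => aux_upper x y x₀ t hx₀ hy hx0 (hcont t ht) (hInt t ht) heq s hs)
        t (Set.right_mem_Icc.2 ht)
  set F : ℝ → ℝ :=
    fun T => ∫ t in (0:ℝ)..T, Real.exp (-δ * t) * (Real.log (x t) + Real.log (y t)) with hF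
  have hstep : ∀ a b : ℝ, 0 ≤ a → a ≤ b →
      F b = F a + ∫ t in a..b, Real.exp (-δ * t) * (Real.log (x t) + Real.log (y t)) := by
    intro a b ha hab
    have h1 : IntervalIntegrable
        (fun t => Real.exp (-δ * t) * (Real.log (x t) + Real.log (y t))) volume a b :=
      (hint b).mono_set (by
        rw [Set.uIcc_of_le hab, Set.uIcc_of_le (le_trans ha hab)]
        exact Set.Icc_subset_Icc ha le_rfl)
    have := intervalIntegral.integral_add_adjacent_intervals (hint a) h1
    simp only [hF]
    linarith
  have hr1 : Real.exp (-δ) < 1 := Real.exp_lt_one_iff.2 (by linarith)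
  have hr0 : 0 < Real.exp (-δ) := Real.exp_pos _
  obtain ⟨c, hc0, hcc⟩ : ∃ c : ℝ, 0 ≤ c ∧ c * (1 - Real.exp (-δ)) = 2 * M :=
    ⟨2 * M / (1 - Real.exp (-δ)), div_nonneg (by linarith) (by linarith),
      div_mul_cancel₀ _ (by linarith)⟩
  have hE1 : ∀ a b : ℝ, 0 ≤ a → a ≤ b → b ≤ a + 1 →
      (∫ t in a..b, Real.exp (-δ * t) * (Real.log (x t) + Real.log (y t)))
        ≤ 2 * M * Real.exp (-δ * a) := by
    intro a b ha hab hb1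
    exact aux_step x y x₀ δ a b hδ hx₀ ha hab hb1 hy hxpos hxle
      (hcont b (le_trans ha hab)) (hInt b (le_trans ha hab)) heq (hint b)
  have key : ∀ n : ℕ, ∀ T T' : ℝ, 0 ≤ T → T ≤ T' → T' ≤ T + n →
      F T' ≤ F T + c * Real.exp (-δ * T) := by
    intro n
    induction n with
    | zero =>
        intro T T' hT hTT' hT'
        have : T' = T := le_antisymm (by simpa using hT') hTT'
        rw [this]
        have := Real.exp_pos (-δ * T)
        nlinarith
    | succ n ih =>
        intro T T' hT hTT' hT'
        by_cases hb : T' ≤ T + 1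
        · have h1 := hE1 T T' hT hTT' hb
          have h2 := hstep T T' hT hTT'
          have h3 : 2 * M * Real.exp (-δ * T) ≤ c * Real.exp (-δ * T) := by
            have he := Real.exp_pos (-δ * T)
            nlinarith [mul_nonneg (mul_nonneg hc0 hr0.le) he.le]
          linarith
        · push_neg at hb
          have hT1 : (0:ℝ) ≤ T + 1 := by linarith
          have h1 : F T' ≤ F (T + 1) + c * Real.exp (-δ * (T + 1)) := by
            refine ih (T + 1) T' hT1 hb.le ?_
            push_cast [Nat.cast_succ] at hT' ⊢
            linarith
          have h2 : F (T + 1) ≤ F T + 2 * M * Real.exp (-δ * T) := by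
            have := hE1 T (T + 1) hT (by linarith) le_rfl
            have := hstep T (T + 1) hT (by linarith)
            linarith
          have h3 : Real.exp (-δ * (T + 1)) = Real.exp (-δ * T) * Real.exp (-δ) := by
            rw [← Real.exp_add]
            ring_nf
          have h4 : c * Real.exp (-δ * (T + 1)) + 2 * M * Real.exp (-δ * T)
              = c * Real.exp (-δ * T) := by
            rw [h3]
            linear_combination (-Real.exp (-δ * T)) * hcc
          linarith
  refine aux_tendsto_of_tail F c δ hc0 hδ ?_
  intro T T' hT hTT'
  refine key ⌈T' - T⌉₊ T T' hT hTT' ?_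
  have := Nat.le_ceil (T' - T)
  linarith


/-- The improper objective integral of problem (P1) is well defined for every
admissible pair: `∫_0^T e^{−δt}(ln x + ln y) dt` has a limit as `T → ∞`, which is
either a finite real number or `−∞`. -/
theorem objective_integral_limit_exists (δ x₀ : ℝ) (hδ : 0 < δ) (hx₀ : 0 < x₀)
    (x y : ℝ → ℝ) (hadm : P1Admissible x₀ x y)
    (hint : ∀ T : ℝ, IntervalIntegrable
      (fun t => Real.exp (-δ * t) * (Real.log (x t) + Real.log (y t))) volume 0 T) :
    (∃ L : ℝ, Tendsto
        (fun T : ℝ => ∫ t in (0:ℝ)..T, Real.exp (-δ * t) * (Real.log (x t) + Real.log (y t)))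
        atTop (nhds L)) ∨
      Tendsto
        (fun T : ℝ => ∫ t in (0:ℝ)..T, Real.exp (-δ * t) * (Real.log (x t) + Real.log (y t)))
        atTop atBot := by
  obtain ⟨hmeas, hloc, hy, hx0, heq⟩ := hadm
  exact objective_integral_limit_exists_aux δ x₀ hδ hx₀ x y hmeas hloc hy hx0 heq hint
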